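/- arXiv:1307.1676 — 3 statements merged into one kernel-verified Lean document; each statement's English description precedes it below -/
import Mathlib

section
/- Let F ∈ k[y_1,…,y_n] be a polynomial and let tdf(F) be the S-submodule of P generated by the top degree forms of all polynomials in the cyclic module ⟨F⟩_S. Then the Hilbert function of the associated graded ring of A = S/Ann(F) satisfies H_A(q) = dim_k tdf(⟨F⟩)_q for every q ≥ 0, where tdf(M)_q = (M ∩ P_{≤q} + P_{≤q−1})/P_{≤q−1}. -/
open MvPolynomial

set_option synthInstance.maxHeartbeats 1000000
set_option maxHeartbeats 1000000

noncomputable def pd {k : Type*} [CommSemiring k] {n : ℕ} (α : Fin n →₀ ℕ) :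
    Module.End k (MvPolynomial (Fin n) k) :=
  (List.ofFn fun i : Fin n =>
    ((MvPolynomial.pderiv i).toLinearMap : Module.End k (MvPolynomial (Fin n) k)) ^ (α i)).prod

section Lists

variable {M : Type*} [Monoid M]

lemma prod_ofFn_mul : ∀ {n : ℕ} (f g : Fin n → M),
    (∀ i j, Commute (g i) (f j)) →
    (List.ofFn fun i => f i * g i).prod = (List.ofFn f).prod * (List.ofFn g).prod := by
  intro n
  induction n with
  | zero => intro f g _; simp
  | succ m ih =>
    intro f g h
    rw [List.ofFn_succ, List.ofFn_succ, List.ofFn_succ, List.prod_cons, List.prod_cons,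
      List.prod_cons, ih (fun i => f i.succ) (fun i => g i.succ) (fun i j => h i.succ j.succ)]
    have hc : Commute (g 0) ((List.ofFn fun i : Fin m => f i.succ).prod) := by
      apply Commute.list_prod_right
      intro x hx
      rw [List.mem_ofFn] at hx
      obtain ⟨i, rfl⟩ := hx
      exact h 0 i.succ
    rw [mul_assoc, ← mul_assoc (g 0), hc.eq]
    simp [mul_assoc]

lemma prod_ofFn_eq_single : ∀ {n : ℕ} (f : Fin n → M) (i : Fin n),
    (∀ j, j ≠ i → f j = 1) → (List.ofFn f).prod = f i := by
  intro n
  induction n with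
  | zero => intro f i; exact absurd i.2 (by simp)
  | succ m ih =>
    intro f i h
    rw [List.ofFn_succ, List.prod_cons]
    rcases eq_or_ne i 0 with rfl | hi
    · have : (List.ofFn fun j : Fin m => f j.succ).prod = 1 := by
        apply List.prod_eq_one
        intro x hx
        rw [List.mem_ofFn] at hx
        obtain ⟨j, rfl⟩ := hx
        exact h j.succ (Fin.succ_ne_zero j)
      rw [this, mul_one]
    · obtain ⟨i', rfl⟩ := Fin.exists_succ_eq.2 hi
      rw [h 0 (Ne.symm hi), one_mul]
      exact ih _ i' fun j hj => h j.succ (by simpa using hj)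

end Lists

namespace ApolAux

variable {k : Type*} [CommSemiring k] {n : ℕ}

local notation "P" => MvPolynomial (Fin n) k

lemma pderiv_commute (i j : Fin n) :
    Commute ((pderiv i).toLinearMap : Module.End k P) (pderiv j).toLinearMap := by
  rcases eq_or_ne i j with rfl | hij
  · exact Commute.refl _
  apply LinearMap.ext
  intro p
  simp only [Module.End.mul_apply, Derivation.coeFn_coe]
  induction p using MvPolynomial.induction_on' with
  | monomial s a =>
    rw [pderiv_monomial, pderiv_monomial, pderiv_monomial, pderiv_monomial]
    have h1 : (s - Finsupp.single j 1 : Fin n →₀ ℕ) i = s i := by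
      rw [Finsupp.tsub_apply, Finsupp.single_eq_of_ne' (Ne.symm hij)]; rfl
    have h2 : (s - Finsupp.single i 1 : Fin n →₀ ℕ) j = s j := by
      rw [Finsupp.tsub_apply, Finsupp.single_eq_of_ne' hij]; rfl
    rw [h1, h2, tsub_right_comm]
    ring_nf
  | add p q hp hq =>
    simp only [map_add] at hp hq ⊢
    rw [hp, hq]

lemma pd_zero : pd (k := k) (n := n) 0 = 1 := by
  unfold pd
  apply List.prod_eq_one
  intro x hx
  rw [List.mem_ofFn] at hx
  obtain ⟨i, rfl⟩ := hx
  simp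

lemma pd_mul (α β : Fin n →₀ ℕ) : pd (k := k) (α + β) = pd α * pd β := by
  unfold pd
  simp only [Finsupp.add_apply, pow_add]
  exact prod_ofFn_mul _ _ fun i j => (pderiv_commute i j).pow_pow _ _

lemma pd_single (i : Fin n) :
    pd (k := k) (Finsupp.single i 1) = (pderiv i).toLinearMap := by
  unfold pd
  rw [prod_ofFn_eq_single _ i]
  · rw [Finsupp.single_eq_same, pow_one]
  · intro j hj
    rw [Finsupp.single_eq_of_ne' (Ne.symm hj), pow_zero]

end ApolAux
namespace ApolAux

variable {k : Type*} [CommSemiring k] {n : ℕ}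

local notation "P" => MvPolynomial (Fin n) k

lemma degsum_mono {β α : Fin n →₀ ℕ} (h : β ≤ α) :
    (β.sum fun _ e => e) ≤ α.sum fun _ e => e := by
  have h2 : β + (α - β) = α := add_tsub_cancel_of_le h
  calc (β.sum fun _ e => e) ≤ (β.sum fun _ e => e) + ((α - β).sum fun _ e => e) :=
        Nat.le_add_right _ _
    _ = α.sum fun _ e => e := by
        rw [← Finsupp.sum_add_index' (fun _ => rfl) (fun _ _ _ => rfl), h2]

lemma pd_monomial_aux : ∀ (N : ℕ) (β : Fin n →₀ ℕ), (β.sum fun _ e => e) = N →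
    ∀ (α : Fin n →₀ ℕ) (c : k),
    pd β (MvPolynomial.monomial α c) =
      if β ≤ α then
        MvPolynomial.monomial (α - β) (c * (∏ i, Nat.descFactorial (α i) (β i) : ℕ))
      else 0 := by
  intro N
  induction N with
  | zero =>
    intro β hβ α c
    have hβ0 : β = 0 := by
      ext i
      by_cases hi : i ∈ β.support
      · exact Finset.sum_eq_zero_iff.mp hβ i hi
      · simpa using Finsupp.notMem_support_iff.mp hi
    subst hβ0
    rw [if_pos (zero_le : 0 ≤ α)]
    simp [pd_zero]
  | succ N ih =>
    intro β hβ α c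
    have hβne : β ≠ 0 := by
      rintro rfl
      simp at hβ
    obtain ⟨i, hi⟩ := Finsupp.support_nonempty_iff.mpr hβne
    have hβi : β i ≠ 0 := Finsupp.mem_support_iff.mp hi
    set β' := β - Finsupp.single i 1 with hβ'def
    have hβeq : β = Finsupp.single i 1 + β' := by
      ext j
      rcases eq_or_ne j i with rfl | hj
      · simp [hβ'def, Finsupp.single_eq_same]
        omega
      · simp [hβ'def, Finsupp.single_eq_of_ne' (Ne.symm hj)]
    have hsum : (β'.sum fun _ e => e) = N := by
      have : (β.sum fun _ e => e) = 1 + (β'.sum fun _ e => e) := by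
        rw [hβeq, Finsupp.sum_add_index' (fun _ => rfl) (fun _ _ _ => rfl),
          Finsupp.sum_single_index rfl]
      omega
    rw [hβeq, pd_mul, pd_single, Module.End.mul_apply, ih β' hsum α c]
    by_cases h' : β' ≤ α
    · by_cases h : Finsupp.single i 1 + β' ≤ α
      · rw [if_pos h', if_pos h]
        rw [Derivation.coeFn_coe]
        rw [MvPolynomial.pderiv_monomial]
        have hexp : α - β' - Finsupp.single i 1 = α - (Finsupp.single i 1 + β') := by
          rw [tsub_tsub, add_comm]
        have hfi : ((Finsupp.single i 1 + β' : Fin n →₀ ℕ)) i = β' i + 1 := by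
          simp [Finsupp.single_eq_same, add_comm]
        have hPP : (∏ j, Nat.descFactorial (α j) ((Finsupp.single i 1 + β' : Fin n →₀ ℕ) j)) =
            (α i - β' i) * ∏ j, Nat.descFactorial (α j) (β' j) := by
          rw [← Finset.mul_prod_erase Finset.univ
              (fun j => Nat.descFactorial (α j) ((Finsupp.single i 1 + β' : Fin n →₀ ℕ) j))
              (Finset.mem_univ i),
            ← Finset.mul_prod_erase Finset.univ
              (fun j => Nat.descFactorial (α j) (β' j)) (Finset.mem_univ i)]
          have herase : ∏ j ∈ Finset.univ.erase i,
              Nat.descFactorial (α j) ((Finsupp.single i 1 + β' : Fin n →₀ ℕ) j) =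
              ∏ j ∈ Finset.univ.erase i, Nat.descFactorial (α j) (β' j) := by
            refine Finset.prod_congr rfl fun j hj => ?_
            have hji : j ≠ i := Finset.ne_of_mem_erase hj
            rw [Finsupp.add_apply, Finsupp.single_eq_of_ne' (Ne.symm hji), zero_add]
          rw [herase, hfi, Nat.descFactorial_succ, mul_assoc]
        have htsub : (α - β' : Fin n →₀ ℕ) i = α i - β' i := Finsupp.tsub_apply α β' i
        rw [hexp, htsub, hPP]
        push_cast
        ring
      · rw [if_pos h', if_neg h]
        rw [Derivation.coeFn_coe, MvPolynomial.pderiv_monomial]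
        have hip : α i ≤ β' i := by
          by_contra hc
          apply h
          rw [Finsupp.le_def]
          intro j
          rcases eq_or_ne j i with rfl | hj
          · rw [Finsupp.add_apply, Finsupp.single_eq_same]
            omega
          · rw [Finsupp.add_apply, Finsupp.single_eq_of_ne' (Ne.symm hj), zero_add]
            exact Finsupp.le_def.mp h' j
        have : (α - β' : Fin n →₀ ℕ) i = 0 := by
          rw [Finsupp.tsub_apply]
          omega
        rw [this, Nat.cast_zero, mul_zero, map_zero]
    · rw [if_neg h', if_neg, map_zero]
      intro hc
      exact h' (le_trans (le_add_self) hc)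

lemma pd_monomial (β α : Fin n →₀ ℕ) (c : k) :
    pd β (MvPolynomial.monomial α c) =
      if β ≤ α then
        MvPolynomial.monomial (α - β) (c * (∏ i, Nat.descFactorial (α i) (β i) : ℕ))
      else 0 :=
  pd_monomial_aux _ β rfl α c

lemma pd_eq_zero_of_totalDegree_lt {β : Fin n →₀ ℕ} {G : P}
    (h : G.totalDegree < β.sum fun _ e => e) : pd β G = 0 := by
  conv_lhs => rw [G.as_sum]
  rw [map_sum]
  refine Finset.sum_eq_zero fun α hα => ?_
  rw [pd_monomial, if_neg]
  intro hc
  exact absurd (le_trans (degsum_mono hc) (MvPolynomial.le_totalDegree hα)) (by omega)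

lemma coeff_zero_pd (β : Fin n →₀ ℕ) (G : P) :
    MvPolynomial.coeff 0 (pd β G) = (∏ i, Nat.factorial (β i) : ℕ) * MvPolynomial.coeff β G := by
  conv_lhs => rw [G.as_sum]
  rw [map_sum, MvPolynomial.coeff_sum]
  have step : ∀ α ∈ G.support,
      MvPolynomial.coeff 0 (pd β (MvPolynomial.monomial α (MvPolynomial.coeff α G))) =
      if α = β then (∏ i, Nat.factorial (β i) : ℕ) * MvPolynomial.coeff α G else 0 := by
    intro α _
    rw [pd_monomial]
    rcases eq_or_ne α β with rfl | hab
    · rw [if_pos le_rfl, if_pos rfl, tsub_self, MvPolynomial.coeff_monomial, if_pos rfl]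
      simp [Nat.descFactorial_self, mul_comm]
    · rw [if_neg hab]
      by_cases hle : β ≤ α
      · rw [if_pos hle, MvPolynomial.coeff_monomial, if_neg]
        intro hc
        exact hab (le_antisymm (tsub_eq_zero_iff_le.mp hc) hle)
      · rw [if_neg hle, MvPolynomial.coeff_zero]
  rw [Finset.sum_congr rfl step, Finset.sum_ite_eq' G.support β
    (fun α => (∏ i, Nat.factorial (β i) : ℕ) * MvPolynomial.coeff α G)]
  split
  · rfl
  · rw [MvPolynomial.notMem_support_iff.mp (by assumption), mul_zero]

end ApolAux
namespace ApolAux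

variable {k : Type*} [CommSemiring k] {n : ℕ}

local notation "P" => MvPolynomial (Fin n) k

noncomputable def E (g : MvPolynomial (Fin n) k) : Module.End k P :=
  (AddMonoidAlgebra.coeff g).sum fun α c => c • pd α

lemma E_monomial (α : Fin n →₀ ℕ) (c : k) :
    E (MvPolynomial.monomial α c) = c • pd α := by
  unfold E
  rw [MvPolynomial.sum_monomial_eq]
  rw [zero_smul]

lemma E_add (g h : MvPolynomial (Fin n) k) : E (g + h) = E g + E h := by
  unfold E
  rw [AddMonoidAlgebra.coeff_add]
  exact Finsupp.sum_add_index' (fun _ => zero_smul _ _) (fun _ _ _ => add_smul _ _ _)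

lemma E_smul (c : k) (g : MvPolynomial (Fin n) k) : E (c • g) = c • E g := by
  unfold E
  rw [AddMonoidAlgebra.coeff_smul]
  rw [Finsupp.sum_smul_index' (fun α => zero_smul k (pd α))]
  rw [Finsupp.smul_sum]
  simp only [smul_smul]
  rfl

noncomputable def Elin : MvPolynomial (Fin n) k →ₗ[k] Module.End k P :=
  { toFun := E, map_add' := E_add, map_smul' := E_smul }

lemma E_mul (g h : MvPolynomial (Fin n) k) : E (g * h) = E g * E h := by
  induction g using MvPolynomial.induction_on' with
  | monomial α c =>
    induction h using MvPolynomial.induction_on' with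
    | monomial β d =>
      rw [MvPolynomial.monomial_mul, E_monomial, E_monomial, E_monomial, pd_mul,
        smul_mul_assoc, mul_smul_comm, smul_smul]
    | add p q hp hq =>
      rw [mul_add, E_add, E_add, hp, hq, mul_add]
  | add p q hp hq =>
    rw [add_mul, E_add, E_add, hp, hq, add_mul]

lemma pd_totalDegree_le (β : Fin n →₀ ℕ) (G : MvPolynomial (Fin n) k) :
    (pd β G).totalDegree ≤ G.totalDegree := by
  conv_lhs => rw [G.as_sum]
  rw [map_sum]
  refine le_trans (MvPolynomial.totalDegree_finset_sum _ _) (Finset.sup_le fun α hα => ?_)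
  rw [pd_monomial]
  split
  · refine le_trans (MvPolynomial.totalDegree_monomial_le _ _) ?_
    refine le_trans (degsum_mono ?_) (MvPolynomial.le_totalDegree hα)
    exact tsub_le_self
  · simp

lemma E_totalDegree_le (g G : MvPolynomial (Fin n) k) :
    (E g G).totalDegree ≤ G.totalDegree := by
  unfold E
  rw [Finsupp.sum, LinearMap.coe_sum, Finset.sum_apply]
  refine le_trans (MvPolynomial.totalDegree_finset_sum _ _) (Finset.sup_le fun α hα => ?_)
  refine le_trans (le_trans (le_of_eq rfl) (MvPolynomial.totalDegree_smul_le _ _)) ?_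
  exact pd_totalDegree_le α G

lemma E_eq_zero_of_lt {g G : MvPolynomial (Fin n) k} {m : ℕ}
    (hg : ∀ α ∈ g.support, m ≤ α.sum fun _ e => e) (hG : G.totalDegree < m) :
    E g G = 0 := by
  unfold E
  rw [Finsupp.sum, LinearMap.coe_sum, Finset.sum_apply]
  refine Finset.sum_eq_zero fun α hα => ?_
  rw [LinearMap.smul_apply, pd_eq_zero_of_totalDegree_lt (lt_of_lt_of_le hG (hg α hα)),
    smul_zero]

end ApolAux
/-- The apolarity action of `S = k[x_1,…,x_n]` on `P = k[y_1,…,y_n]`,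
obtained by letting `x_i` act as `∂/∂y_i`. -/
noncomputable def apol {k : Type*} [CommSemiring k] {n : ℕ}
    (g F : MvPolynomial (Fin n) k) : MvPolynomial (Fin n) k :=
  (AddMonoidAlgebra.coeff g).sum fun α c => c • pd α F
/-- The apolar ideal `Ann(F)` of `F`, as an ideal of `S = k[x_1,…,x_n]`. -/
noncomputable def annIdeal {k : Type*} [CommRing k] {n : ℕ}
    (F : MvPolynomial (Fin n) k) : Ideal (MvPolynomial (Fin n) k) :=
  Ideal.span {g : MvPolynomial (Fin n) k | apol g F = 0}

/-- The apolar algebra `A = S/Ann(F)`. -/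
abbrev ApolarAlgebra (k : Type*) [CommRing k] {n : ℕ}
    (F : MvPolynomial (Fin n) k) : Type _ :=
  MvPolynomial (Fin n) k ⧸ annIdeal F

/-- The maximal ideal `𝔪 = (x_1,…,x_n)` of the apolar algebra. -/
noncomputable def maxIdeal {k : Type*} [CommRing k] {n : ℕ}
    (F : MvPolynomial (Fin n) k) : Ideal (ApolarAlgebra k F) :=
  Ideal.map (Ideal.Quotient.mk (annIdeal F)) (Ideal.span (Set.range MvPolynomial.X))

/-- `P_{≤ q−1}`: polynomials of degree at most `q − 1`, with `P_{≤ −1} = 0`. -/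
noncomputable def degLT (k : Type*) [CommSemiring k] (n : ℕ) :
    ℕ → Submodule k (MvPolynomial (Fin n) k)
  | 0 => ⊥
  | (q + 1) => MvPolynomial.restrictTotalDegree (Fin n) k q

/-- The underlying `k`-subspace of the cyclic `S`-module `⟨F⟩ = S ∘ F`. -/
noncomputable def cyclicModule {k : Type*} [CommSemiring k] {n : ℕ}
    (F : MvPolynomial (Fin n) k) : Submodule k (MvPolynomial (Fin n) k) :=
  Submodule.span k (Set.range fun g => apol g F)

namespace ApolAux

variable {k : Type*} [CommSemiring k] {n : ℕ}

lemma apol_eq_E (g F : MvPolynomial (Fin n) k) : apol g F = E g F := by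
  unfold apol E
  rw [Finsupp.sum, Finsupp.sum, LinearMap.coe_sum, Finset.sum_apply]
  rfl

end ApolAux
namespace ApolAux

section JIdeal

variable (k : Type*) [CommSemiring k] (n : ℕ)

noncomputable def Jideal : Ideal (MvPolynomial (Fin n) k) :=
  Ideal.span (Set.range MvPolynomial.X)

variable {k n}

/-- The ideal of polynomials all of whose monomials have degree at least `m`. -/
def Kideal (m : ℕ) : Ideal (MvPolynomial (Fin n) k) where
  carrier := {g | ∀ α ∈ g.support, m ≤ α.sum fun _ e => e}
  zero_mem' := by intro α hα; simp at hα
  add_mem' := by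
    intro a b ha hb α hα
    classical
    rcases Finset.mem_union.mp (Finsupp.support_add hα) with h | h
    · exact ha α h
    · exact hb α h
  smul_mem' := by
    classical
    intro c g hg α hα
    rw [smul_eq_mul] at hα
    obtain ⟨a, ha, b, hb, rfl⟩ := Finset.mem_add.mp (MvPolynomial.support_mul c g hα)
    calc m ≤ b.sum fun _ e => e := hg b hb
      _ ≤ (a + b).sum fun _ e => e := degsum_mono le_add_self

lemma J_le_K1 [Nontrivial k] : Jideal k n ≤ Kideal 1 := by
  rw [Jideal, Ideal.span_le]
  rintro _ ⟨i, rfl⟩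
  intro α hα
  rw [MvPolynomial.support_X, Finset.mem_singleton] at hα
  subst hα
  rw [Finsupp.sum_single_index rfl]

lemma Jpow_le_K [Nontrivial k] (m : ℕ) : Jideal k n ^ m ≤ Kideal m := by
  induction m with
  | zero =>
    rw [pow_zero, Ideal.one_eq_top]
    intro g _ α _
    exact Nat.zero_le _
  | succ m ih =>
    rw [pow_succ]
    refine Ideal.mul_le.mpr fun r hr s hs α hα => ?_
    classical
    obtain ⟨a, ha, b, hb, rfl⟩ := Finset.mem_add.mp (MvPolynomial.support_mul r s hα)
    have h1 : m ≤ a.sum fun _ e => e := ih hr a ha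
    have h2 : 1 ≤ b.sum fun _ e => e := J_le_K1 hs b hb
    calc m + 1 ≤ (a.sum fun _ e => e) + (b.sum fun _ e => e) := by omega
      _ = (a + b).sum fun _ e => e :=
        (Finsupp.sum_add_index' (fun _ => rfl) (fun _ _ _ => rfl)).symm

lemma monomial_one_mem_Jpow :
    ∀ (m : ℕ) (β : Fin n →₀ ℕ), m ≤ (β.sum fun _ e => e) →
      MvPolynomial.monomial β (1 : k) ∈ Jideal k n ^ m := by
  intro m
  induction m with
  | zero => intro β _; rw [pow_zero, Ideal.one_eq_top]; trivial
  | succ m ih =>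
    intro β hβ
    have hβne : β ≠ 0 := by
      rintro rfl
      simp at hβ
    obtain ⟨i, hi⟩ := Finsupp.support_nonempty_iff.mpr hβne
    have hβi : β i ≠ 0 := Finsupp.mem_support_iff.mp hi
    set β' := β - Finsupp.single i 1 with hβ'def
    have hβeq : β = Finsupp.single i 1 + β' := by
      ext j
      rcases eq_or_ne j i with rfl | hj
      · simp [hβ'def, Finsupp.single_eq_same]; omega
      · simp [hβ'def, Finsupp.single_eq_of_ne' (Ne.symm hj)]
    have hsum : m ≤ β'.sum fun _ e => e := by
      have : (β.sum fun _ e => e) = 1 + (β'.sum fun _ e => e) := by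
        rw [hβeq, Finsupp.sum_add_index' (fun _ => rfl) (fun _ _ _ => rfl),
          Finsupp.sum_single_index rfl]
      omega
    have hX : (MvPolynomial.X i : MvPolynomial (Fin n) k) ∈ Jideal k n :=
      Ideal.subset_span ⟨i, rfl⟩
    have hmul : MvPolynomial.monomial β (1 : k) =
        MvPolynomial.X i * MvPolynomial.monomial β' (1 : k) := by
      rw [MvPolynomial.X, MvPolynomial.monomial_mul, one_mul, ← hβeq]
    rw [hmul, pow_succ']
    exact Ideal.mul_mem_mul hX (ih β' hsum)

end JIdeal

section Field

variable {k : Type*} [Field k] [CharZero k] {n : ℕ}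

lemma factorial_prod_ne_zero (β : Fin n →₀ ℕ) :
    ((∏ i, Nat.factorial (β i) : ℕ) : k) ≠ 0 := by
  rw [Nat.cast_ne_zero]
  exact Finset.prod_ne_zero_iff.mpr fun i _ => (Nat.factorial_pos _).ne'

lemma eq_zero_of_forall_coeff_zero_E {G : MvPolynomial (Fin n) k}
    (h : ∀ g, MvPolynomial.coeff 0 (E g G) = 0) : G = 0 := by
  apply MvPolynomial.ext
  intro β
  have := h (MvPolynomial.monomial β 1)
  rw [E_monomial, one_smul, coeff_zero_pd] at this
  rw [MvPolynomial.coeff_zero]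
  exact (mul_eq_zero.mp this).resolve_left (factorial_prod_ne_zero β)

variable (F : MvPolynomial (Fin n) k)

lemma apol_mem_cyclic (g : MvPolynomial (Fin n) k) : E g F ∈ cyclicModule F :=
  Submodule.subset_span ⟨g, (apol_eq_E g F)⟩

lemma cyclic_le_restrict :
    cyclicModule F ≤ MvPolynomial.restrictTotalDegree (Fin n) k F.totalDegree := by
  rw [cyclicModule, Submodule.span_le]
  rintro _ ⟨g, rfl⟩
  dsimp only
  rw [SetLike.mem_coe, MvPolynomial.mem_restrictTotalDegree, apol_eq_E]
  exact E_totalDegree_le g F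

lemma cyclic_findim : FiniteDimensional k (cyclicModule F) :=
  Submodule.finiteDimensional_of_le (cyclic_le_restrict F)

lemma E_zero : E (0 : MvPolynomial (Fin n) k) = 0 := by
  unfold E
  exact Finsupp.sum_zero_index

lemma cyclic_stable (h : MvPolynomial (Fin n) k) {G : MvPolynomial (Fin n) k}
    (hG : G ∈ cyclicModule F) : E h G ∈ cyclicModule F := by
  induction hG using Submodule.span_induction with
  | mem x hx =>
    obtain ⟨g, rfl⟩ := hx
    dsimp only
    rw [apol_eq_E, ← Module.End.mul_apply, ← E_mul]
    exact apol_mem_cyclic F _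
  | zero => rw [map_zero]; exact Submodule.zero_mem _
  | add x y _ _ hx hy => rw [map_add]; exact Submodule.add_mem _ hx hy
  | smul c x _ hx => rw [map_smul]; exact Submodule.smul_mem _ c hx

lemma vanish_of_apol_zero {g : MvPolynomial (Fin n) k} (hg : E g F = 0) :
    ∀ G ∈ cyclicModule F, E g G = 0 := by
  intro G hG
  induction hG using Submodule.span_induction with
  | mem x hx =>
    obtain ⟨h, rfl⟩ := hx
    dsimp only
    rw [apol_eq_E, ← Module.End.mul_apply, ← E_mul, mul_comm, E_mul, Module.End.mul_apply, hg,
      map_zero]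
  | zero => rw [map_zero]
  | add x y _ _ hx hy => rw [map_add, hx, hy, add_zero]
  | smul c x _ hx => rw [map_smul, hx, smul_zero]

/-- The pairing map `S →ₗ Dual(⟨F⟩)`, `g ↦ (G ↦ (g ∘ G)(0))`. -/
noncomputable def Phi : MvPolynomial (Fin n) k →ₗ[k] Module.Dual k (cyclicModule F) where
  toFun g := (MvPolynomial.lcoeff k 0) ∘ₗ (E g) ∘ₗ (cyclicModule F).subtype
  map_add' g h := by ext G; simp [E_add]
  map_smul' c g := by ext G; simp [E_smul]

lemma Phi_apply (g : MvPolynomial (Fin n) k) (G : cyclicModule F) :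
    Phi F g G = MvPolynomial.coeff 0 (E g (G : MvPolynomial (Fin n) k)) := rfl

lemma ker_Phi : LinearMap.ker (Phi F) = (annIdeal F).restrictScalars k := by
  ext g
  rw [LinearMap.mem_ker, Submodule.restrictScalars_mem]
  constructor
  · intro hg
    have hEgF : E g F = 0 := by
      apply eq_zero_of_forall_coeff_zero_E
      intro h
      have h1 : E h (E g F) = E g (E h F) := by
        rw [← Module.End.mul_apply, ← Module.End.mul_apply, ← E_mul, ← E_mul, mul_comm]
      rw [← Module.End.mul_apply, ← E_mul, mul_comm h g, E_mul, Module.End.mul_apply]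
      have := congrFun (congrArg DFunLike.coe hg) ⟨E h F, apol_mem_cyclic F h⟩
      rw [Phi_apply] at this
      exact this
    exact Ideal.subset_span (by rw [Set.mem_setOf_eq, apol_eq_E]; exact hEgF)
  · intro hg
    have hann : annIdeal F ≤
        { carrier := {g | ∀ G ∈ cyclicModule F, E g G = 0}
          zero_mem' := fun G _ => by rw [E_zero]; rfl
          add_mem' := fun {a b} ha hb G hG => by
            rw [E_add, LinearMap.add_apply, ha G hG, hb G hG, add_zero]
          smul_mem' := fun c g hg G hG => by
            rw [smul_eq_mul, E_mul, Module.End.mul_apply, hg G hG, map_zero] } := by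
      rw [annIdeal, Ideal.span_le]
      intro g₀ hg₀
      rw [Set.mem_setOf_eq, apol_eq_E] at hg₀
      exact vanish_of_apol_zero F hg₀
    have hvan := hann hg
    apply LinearMap.ext
    rintro ⟨G, hG⟩
    rw [Phi_apply]
    change ∀ G ∈ cyclicModule F, E g G = 0 at hvan
    rw [hvan G hG, MvPolynomial.coeff_zero, LinearMap.zero_apply]

end Field

end ApolAux
namespace ApolAux

variable {k : Type*} [Field k] [CharZero k] {n : ℕ} (F : MvPolynomial (Fin n) k)

lemma Phi_surjective : Function.Surjective (Phi F) := by
  intro φ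
  classical
  set D := F.totalDegree with hD
  obtain ⟨Q, hQ⟩ := Submodule.exists_isCompl (cyclicModule F)
  set ψ : MvPolynomial (Fin n) k →ₗ[k] k :=
    φ ∘ₗ (cyclicModule F).projectionOnto Q hQ with hψdef
  have hψ : ∀ G : cyclicModule F, ψ (G : MvPolynomial (Fin n) k) = φ G := by
    intro G
    rw [hψdef, LinearMap.comp_apply, Submodule.projectionOnto_apply_left]
  set T : Finset (Fin n →₀ ℕ) :=
    (Finset.range (D + 1)).biUnion (fun m => Finset.finsuppAntidiag Finset.univ m) with hT
  have hmemT : ∀ β : Fin n →₀ ℕ, (β.sum fun _ e => e) ≤ D → β ∈ T := by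
    intro β hβ
    rw [hT, Finset.mem_biUnion]
    refine ⟨β.sum fun _ e => e, Finset.mem_range.mpr (by omega), ?_⟩
    rw [Finset.mem_finsuppAntidiag]
    exact ⟨by rw [Finsupp.sum_fintype _ _ fun _ => rfl], Finset.subset_univ _⟩
  refine ⟨∑ β ∈ T, MvPolynomial.monomial β
      (ψ (MvPolynomial.monomial β 1) * ((∏ i, Nat.factorial (β i) : ℕ) : k)⁻¹), ?_⟩
  apply LinearMap.ext
  rintro ⟨G, hG⟩
  rw [map_sum, LinearMap.sum_apply]
  have hstep : ∀ β ∈ T,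
      Phi F (MvPolynomial.monomial β (ψ (MvPolynomial.monomial β 1) *
        ((∏ i, Nat.factorial (β i) : ℕ) : k)⁻¹)) ⟨G, hG⟩ =
      ψ (MvPolynomial.monomial β 1) * MvPolynomial.coeff β G := by
    intro β _
    rw [Phi_apply, E_monomial, LinearMap.smul_apply, MvPolynomial.coeff_smul,
      coeff_zero_pd, smul_eq_mul]
    have hb : ((∏ i, Nat.factorial (β i) : ℕ) : k) ≠ 0 := factorial_prod_ne_zero β
    rw [mul_assoc, ← mul_assoc (((∏ i, Nat.factorial (β i) : ℕ) : k))⁻¹, inv_mul_cancel₀ hb,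
      one_mul]
  rw [Finset.sum_congr rfl hstep]
  have hGd : G.totalDegree ≤ D :=
    (MvPolynomial.mem_restrictTotalDegree _ _ _).mp (cyclic_le_restrict F hG)
  have hsub : G.support ⊆ T := fun β hβ =>
    hmemT β (le_trans (MvPolynomial.le_totalDegree hβ) hGd)
  rw [← Finset.sum_subset hsub (fun β _ hβ => by
    rw [MvPolynomial.notMem_support_iff.mp hβ, mul_zero])]
  rw [← hψ ⟨G, hG⟩]
  have hGsum : ψ G = ∑ v ∈ G.support, ψ (MvPolynomial.monomial v (MvPolynomial.coeff v G)) := by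
    conv_lhs => rw [G.as_sum]
    rw [map_sum]
  rw [hGsum]
  refine Finset.sum_congr rfl fun β hβ => ?_
  have : (MvPolynomial.monomial β) (MvPolynomial.coeff β G) =
      (MvPolynomial.coeff β G) • MvPolynomial.monomial β (1 : k) := by
    rw [MvPolynomial.smul_monomial, smul_eq_mul, mul_one]
  rw [this, map_smul, smul_eq_mul, mul_comm]

end ApolAux
namespace ApolAux

section QuotHelper

variable {k : Type*} [Field k] {V W : Type*} [AddCommGroup V] [Module k V]
  [AddCommGroup W] [Module k W]

noncomputable def quotMapEquiv (f : V →ₗ[k] W) (hf : Function.Surjective f)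
    (U : Submodule k V) (hU : LinearMap.ker f ≤ U) :
    (V ⧸ U) ≃ₗ[k] W ⧸ Submodule.map f U := by
  refine LinearEquiv.ofBijective (Submodule.mapQ U (Submodule.map f U) f
    (Submodule.le_comap_map f U)) ⟨?_, ?_⟩
  · rw [← LinearMap.ker_eq_bot, eq_bot_iff]
    intro x hx
    obtain ⟨v, rfl⟩ := Submodule.Quotient.mk_surjective U x
    rw [LinearMap.mem_ker, Submodule.mapQ_apply, Submodule.Quotient.mk_eq_zero] at hx
    obtain ⟨u, hu, hfu⟩ := hx
    have : v - u ∈ LinearMap.ker f := by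
      rw [LinearMap.mem_ker, map_sub, hfu, sub_self]
    have hvU : v ∈ U := by
      have := add_mem (hU this) hu
      rwa [sub_add_cancel] at this
    rw [Submodule.mem_bot, Submodule.Quotient.mk_eq_zero]
    exact hvU
  · intro y
    obtain ⟨w, rfl⟩ := Submodule.Quotient.mk_surjective _ y
    obtain ⟨v, rfl⟩ := hf w
    exact ⟨Submodule.Quotient.mk v, by rw [Submodule.mapQ_apply]⟩

end QuotHelper

section Main

variable {k : Type*} [Field k] [CharZero k] {n : ℕ} (F : MvPolynomial (Fin n) k)

lemma coann_eq (q : ℕ) :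
    (Submodule.map (Phi F) ((Jideal k n ^ (q + 1)).restrictScalars k)).dualCoannihilator
      = Submodule.comap (cyclicModule F).subtype
          (MvPolynomial.restrictTotalDegree (Fin n) k q) := by
  ext G
  rw [Submodule.mem_dualCoannihilator, Submodule.mem_comap,
    MvPolynomial.mem_restrictTotalDegree]
  constructor
  · intro h
    by_contra hc
    push_neg at hc
    rw [MvPolynomial.totalDegree] at hc
    obtain ⟨β, hβmem, hβq⟩ := Finset.lt_sup_iff.mp hc
    have hg : MvPolynomial.monomial β (1 : k) ∈ Jideal k n ^ (q + 1) :=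
      monomial_one_mem_Jpow _ _ (by omega)
    have hmem : Phi F (MvPolynomial.monomial β (1 : k)) ∈
        Submodule.map (Phi F) ((Jideal k n ^ (q + 1)).restrictScalars k) :=
      Submodule.mem_map_of_mem (by rwa [Submodule.restrictScalars_mem])
    have := h _ hmem
    rw [Phi_apply, E_monomial, one_smul, coeff_zero_pd] at this
    rcases mul_eq_zero.mp this with h1 | h2
    · exact factorial_prod_ne_zero β h1
    · exact MvPolynomial.mem_support_iff.mp hβmem h2
  · intro hdeg φ hφ
    obtain ⟨g, hgJ, rfl⟩ := hφ
    have hgJ' : g ∈ Jideal k n ^ (q + 1) := hgJ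
    rw [Phi_apply]
    have hzero : E g (G : MvPolynomial (Fin n) k) = 0 :=
      E_eq_zero_of_lt (fun α hα => Jpow_le_K (q + 1) hgJ' α hα) (by exact Nat.lt_succ_of_le hdeg)
    rw [hzero, MvPolynomial.coeff_zero]

lemma restrictScalars_sup (I J : Ideal (MvPolynomial (Fin n) k)) :
    (I ⊔ J).restrictScalars k = I.restrictScalars k ⊔ J.restrictScalars k := by
  ext x
  rw [Submodule.restrictScalars_mem, Submodule.mem_sup, Submodule.mem_sup]
  simp only [Submodule.restrictScalars_mem]

lemma finrank_quot_pow_succ (q : ℕ) :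
    Module.finrank k (ApolarAlgebra k F ⧸ (maxIdeal F) ^ (q + 1)) =
    Module.finrank k
      ↥(cyclicModule F ⊓ MvPolynomial.restrictTotalDegree (Fin n) k q) := by
  classical
  haveI : FiniteDimensional k (cyclicModule F) := cyclic_findim F
  set I : Ideal (MvPolynomial (Fin n) k) := annIdeal F with hI
  set J' : Ideal (MvPolynomial (Fin n) k) := Jideal k n ^ (q + 1) with hJ'
  set Λ : Submodule k (Module.Dual k (cyclicModule F)) :=
    Submodule.map (Phi F) (J'.restrictScalars k) with hΛ
  -- step 1 : A ⧸ 𝔪^(q+1) ≃ₗ S ⧸ (I ⊔ J')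
  have h1 : (maxIdeal F) ^ (q + 1) =
      Ideal.map (Ideal.Quotient.mkₐ k I) J' := by
    rw [maxIdeal, ← Ideal.map_pow]
    rfl
  have e1 : (ApolarAlgebra k F ⧸ (maxIdeal F) ^ (q + 1)) ≃ₗ[k]
      (MvPolynomial (Fin n) k ⧸ (I ⊔ J')) :=
    (Ideal.quotientEquivAlgOfEq k h1).toLinearEquiv.trans
      (DoubleQuot.quotQuotEquivQuotSupₐ k I J').toLinearEquiv
  -- step 2 : S ⧸ (I ⊔ J') ≃ₗ Dual M ⧸ Λ
  have hker : LinearMap.ker (Phi F) ≤ (I ⊔ J').restrictScalars k := by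
    rw [ker_Phi]
    intro x hx
    rw [Submodule.restrictScalars_mem] at hx ⊢
    exact Ideal.mem_sup_left hx
  have hmap : Submodule.map (Phi F) ((I ⊔ J').restrictScalars k) = Λ := by
    rw [restrictScalars_sup, Submodule.map_sup]
    have : Submodule.map (Phi F) (I.restrictScalars k) = ⊥ := by
      rw [← ker_Phi, eq_bot_iff]
      rintro _ ⟨v, hv, rfl⟩
      rw [Submodule.mem_bot]
      exact hv
    rw [this, bot_sup_eq]
  have e2a : (MvPolynomial (Fin n) k ⧸ ((I ⊔ J').restrictScalars k)) ≃ₗ[k]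
      (Module.Dual k (cyclicModule F) ⧸ Λ) := by
    rw [← hmap]
    exact quotMapEquiv (Phi F) (Phi_surjective F) _ hker
  have e2b : (MvPolynomial (Fin n) k ⧸ ((I ⊔ J').restrictScalars k)) ≃ₗ[k]
      (MvPolynomial (Fin n) k ⧸ (I ⊔ J')) :=
    Submodule.Quotient.restrictScalarsEquiv k (I ⊔ J')
  have e2 : (MvPolynomial (Fin n) k ⧸ (I ⊔ J')) ≃ₗ[k]
      (Module.Dual k (cyclicModule F) ⧸ Λ) := e2b.symm.trans e2a
  -- step 3 : dimension count
  have h3 := Submodule.finrank_quotient_add_finrank Λ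
  have h4 := Subspace.finrank_add_finrank_dualCoannihilator_eq Λ
  rw [hΛ, coann_eq F q, ← hΛ] at h4
  have h5 : Module.finrank k
      ↥(Submodule.comap (cyclicModule F).subtype
        (MvPolynomial.restrictTotalDegree (Fin n) k q)) =
      Module.finrank k
        ↥(cyclicModule F ⊓ MvPolynomial.restrictTotalDegree (Fin n) k q) := by
    have e : ↥(Submodule.comap (cyclicModule F).subtype
        (MvPolynomial.restrictTotalDegree (Fin n) k q)) ≃ₗ[k]
        ↥(Submodule.map (cyclicModule F).subtype (Submodule.comap (cyclicModule F).subtype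
          (MvPolynomial.restrictTotalDegree (Fin n) k q))) :=
      Submodule.equivMapOfInjective ((cyclicModule F).subtype) (Submodule.injective_subtype _) _
    rw [Submodule.map_comap_subtype] at e
    exact LinearEquiv.finrank_eq e
  have h6 : Module.finrank k (Module.Dual k (cyclicModule F)) =
      Module.finrank k (cyclicModule F) := Subspace.dual_finrank_eq
  have h7 : Module.finrank k (ApolarAlgebra k F ⧸ (maxIdeal F) ^ (q + 1)) =
      Module.finrank k (Module.Dual k (cyclicModule F) ⧸ Λ) :=
    LinearEquiv.finrank_eq (e1.trans e2)
  rw [h7]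
  omega

end Main

end ApolAux
namespace ApolAux

section Final

variable {k : Type*} [Field k] [CharZero k] {n : ℕ} (F : MvPolynomial (Fin n) k)

lemma finrank_comap_subtype {V : Type*} [AddCommGroup V] [Module k V]
    (p U : Submodule k V) :
    Module.finrank k ↥(Submodule.comap p.subtype U) = Module.finrank k ↥(p ⊓ U) := by
  have e : ↥(Submodule.comap p.subtype U) ≃ₗ[k]
      ↥(Submodule.map p.subtype (Submodule.comap p.subtype U)) :=
    Submodule.equivMapOfInjective (p.subtype) (Submodule.injective_subtype _) _
  rw [Submodule.map_comap_subtype] at e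
  exact LinearEquiv.finrank_eq e

lemma finrank_quot_pow_all (j : ℕ) :
    Module.finrank k (ApolarAlgebra k F ⧸ (maxIdeal F) ^ j) =
    Module.finrank k ↥(cyclicModule F ⊓ degLT k n j) := by
  cases j with
  | zero =>
    rw [show maxIdeal F ^ 0 = ⊤ from by simp]
    have h0 : degLT k n 0 = (⊥ : Submodule k (MvPolynomial (Fin n) k)) := rfl
    rw [h0, inf_bot_eq]
    haveI : Subsingleton (ApolarAlgebra k F ⧸ (⊤ : Ideal (ApolarAlgebra k F))) :=
      Ideal.Quotient.subsingleton_iff.mpr rfl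
    rw [Module.finrank_zero_of_subsingleton, finrank_bot]
  | succ q =>
    have h1 : degLT k n (q + 1) = MvPolynomial.restrictTotalDegree (Fin n) k q := rfl
    rw [h1]
    exact finrank_quot_pow_succ F q

lemma degLT_le (q : ℕ) :
    degLT k n q ≤ MvPolynomial.restrictTotalDegree (Fin n) k q := by
  cases q with
  | zero => exact bot_le
  | succ m =>
    intro x hx
    have hx' : x ∈ MvPolynomial.restrictTotalDegree (Fin n) k m := hx
    rw [MvPolynomial.mem_restrictTotalDegree] at hx' ⊢
    omega

end Final

end ApolAux

/-- The Hilbert function of `gr(A)` for `A = S/Ann(F)` equals the dimension of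
the top-degree-form module of `⟨F⟩`: for every `q ≥ 0`,
`dim_k 𝔪^q/𝔪^{q+1} = dim_k tdf(⟨F⟩)_q` where
`tdf(M)_q = (M ∩ P_{≤q} + P_{≤q−1})/P_{≤q−1}`. -/
theorem hilbert_eq_tdf_dim {k : Type*} [Field k] [CharZero k] {n : ℕ}
    (F : MvPolynomial (Fin n) k) (q : ℕ) :
    Module.finrank k (ApolarAlgebra k F ⧸ (maxIdeal F) ^ (q + 1)) -
      Module.finrank k (ApolarAlgebra k F ⧸ (maxIdeal F) ^ q) =
    Module.finrank k
      (Submodule.map (degLT k n q).mkQ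
        (cyclicModule F ⊓ MvPolynomial.restrictTotalDegree (Fin n) k q)) := by
  classical
  open ApolAux in
  set Mq : Submodule k (MvPolynomial (Fin n) k) :=
    cyclicModule F ⊓ MvPolynomial.restrictTotalDegree (Fin n) k q with hMq
  haveI : FiniteDimensional k Mq := Submodule.finiteDimensional_of_le inf_le_right
  have hrn := LinearMap.finrank_range_add_finrank_ker ((degLT k n q).mkQ.domRestrict Mq)
  rw [LinearMap.range_domRestrict, LinearMap.ker_domRestrict, Submodule.ker_mkQ,
    ApolAux.finrank_comap_subtype] at hrn
  have hinf : Mq ⊓ degLT k n q = cyclicModule F ⊓ degLT k n q := by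
    rw [hMq, inf_assoc, inf_eq_right.mpr (ApolAux.degLT_le q)]
  rw [hinf] at hrn
  have h1 := ApolAux.finrank_quot_pow_all F (q + 1)
  have h2 := ApolAux.finrank_quot_pow_all F q
  have h3 : degLT k n (q + 1) = MvPolynomial.restrictTotalDegree (Fin n) k q := rfl
  rw [h3] at h1
  rw [← hMq] at h1
  rw [h1, h2]
  omega
end

section
/- Let G ∈ k[y_1,…,y_m] be a homogeneous-free polynomial with σ ∘ G = 1 for some σ ∈ k[x_1,…,x_m] of order deg(G), let F = G + Σ_{j=m+1}^n y_j², and let A = S[n]/Ann(F). Then for all i with 1 ≤ i ≤ n and m+1 ≤ j ≤ n with i ≤ j, the product x_i x_j lies in Ann(F) + (σ); in particular the images of x_{m+1},…,x_n lie in the socle of S[n]/(Ann(F)+(σ)). -/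
open MvPolynomial

section Aux

lemma prodOfFnOne {M : Type*} [Monoid M] {n : ℕ} (f : Fin n → M) (hf : ∀ t, f t = 1) :
    (List.ofFn f).prod = 1 := by
  apply List.prod_eq_one
  intro x hx
  obtain ⟨t, rfl⟩ := List.mem_ofFn.mp hx
  exact hf t

lemma prodOfFnSingle {M : Type*} [Monoid M] : ∀ {n : ℕ} (f : Fin n → M) (i : Fin n),
    (∀ t, t ≠ i → f t = 1) → (List.ofFn f).prod = f i := by
  intro n
  induction n with
  | zero => exact fun f i _ => i.elim0
  | succ n ih =>
    intro f i hf
    rw [List.ofFn_succ, List.prod_cons]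
    rcases Fin.eq_zero_or_eq_succ i with rfl | ⟨j, rfl⟩
    · rw [prodOfFnOne _ (fun t => hf _ (Fin.succ_ne_zero t)), mul_one]
    · rw [hf 0 (Fin.succ_ne_zero j).symm, one_mul]
      exact ih (fun t => f t.succ) j (fun t ht => hf t.succ (fun h => ht (Fin.succ_injective _ h)))

lemma prodOfFnMul {M : Type*} [Monoid M] : ∀ {n : ℕ} (f g : Fin n → M),
    (∀ i j, Commute (f i) (g j)) →
    (List.ofFn fun i => f i * g i).prod = (List.ofFn f).prod * (List.ofFn g).prod := by
  intro n
  induction n with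
  | zero => simp
  | succ n ih =>
    intro f g hc
    rw [List.ofFn_succ, List.ofFn_succ, List.ofFn_succ, List.prod_cons, List.prod_cons,
      List.prod_cons]
    have hrw := ih (fun t => f t.succ) (fun t => g t.succ) (fun i j => hc _ _)
    rw [hrw]
    have hcp : Commute (g 0) (List.ofFn fun t => f t.succ).prod := by
      apply Commute.list_prod_right
      intro x hx
      obtain ⟨t, rfl⟩ := List.mem_ofFn.mp hx
      exact (hc t.succ 0).symm
    rw [mul_assoc, ← mul_assoc (g 0), hcp.eq, mul_assoc, ← mul_assoc, ← mul_assoc]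

variable {k : Type*} [CommSemiring k] {n : ℕ}

lemma pderivPderiv (i j : Fin n) (p : MvPolynomial (Fin n) k) :
    pderiv i (pderiv j p) = pderiv j (pderiv i p) := by
  induction p using MvPolynomial.induction_on' with
  | monomial s a =>
    simp only [pderiv_monomial]
    rcases eq_or_ne i j with rfl | hij
    · rfl
    · congr 1
      · rw [tsub_tsub, tsub_tsub, add_comm]
      · have h1 : ((s - Finsupp.single j 1 : Fin n →₀ ℕ)) i = s i := by
          rw [Finsupp.tsub_apply, Finsupp.single_eq_of_ne' hij.symm, tsub_zero]
        have h2 : ((s - Finsupp.single i 1 : Fin n →₀ ℕ)) j = s j := by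
          rw [Finsupp.tsub_apply, Finsupp.single_eq_of_ne' hij, tsub_zero]
        rw [h1, h2, mul_assoc, mul_assoc, mul_comm (s j : k)]
  | add p q hp hq => simp [hp, hq]

lemma pderivEndCommute (i j : Fin n) :
    Commute ((pderiv i).toLinearMap : Module.End k (MvPolynomial (Fin n) k))
      (pderiv j).toLinearMap := by
  apply LinearMap.ext
  intro p
  exact pderivPderiv i j p

lemma pdZero : pd (0 : Fin n →₀ ℕ) = (1 : Module.End k (MvPolynomial (Fin n) k)) := by
  unfold pd
  apply List.prod_eq_one
  intro x hx
  obtain ⟨t, rfl⟩ := List.mem_ofFn.mp hx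
  simp

lemma pdSingle (i : Fin n) (r : ℕ) :
    pd (Finsupp.single i r)
      = ((pderiv i).toLinearMap : Module.End k (MvPolynomial (Fin n) k)) ^ r := by
  unfold pd
  rw [prodOfFnSingle _ i, Finsupp.single_eq_same]
  intro t ht
  rw [Finsupp.single_eq_of_ne' (Ne.symm ht), pow_zero]

lemma pdAdd (α β : Fin n →₀ ℕ) :
    pd (α + β) = (pd α * pd β : Module.End k (MvPolynomial (Fin n) k)) := by
  unfold pd
  simp only [Finsupp.add_apply, pow_add]
  exact prodOfFnMul _ _ (fun i j => (pderivEndCommute i j).pow_pow _ _)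

lemma pderivMemSupported {s : Set (Fin n)} {p : MvPolynomial (Fin n) k} (u : Fin n)
    (hp : p ∈ supported k s) : pderiv u p ∈ supported k s := by
  induction hp using Algebra.adjoin_induction with
  | mem x hx =>
    obtain ⟨j, _, rfl⟩ := hx
    rcases eq_or_ne j u with rfl | h
    · rw [pderiv_X_self]; exact one_mem _
    · rw [pderiv_X_of_ne h]; exact zero_mem _
  | algebraMap r =>
    rw [MvPolynomial.algebraMap_eq, pderiv_C]; exact zero_mem _
  | add x y hx hy ihx ihy => rw [map_add]; exact add_mem ihx ihy
  | mul x y hx hy ihx ihy =>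
    rw [pderiv_mul]
    exact add_mem (mul_mem ihx hy) (mul_mem hx ihy)

lemma pderivZeroOfSupported {s : Set (Fin n)} {p : MvPolynomial (Fin n) k}
    (hp : p ∈ supported k s) {u : Fin n} (hu : u ∉ s) : pderiv u p = 0 :=
  pderiv_eq_zero_of_notMem_vars (fun h => hu (mem_supported.mp hp h))

lemma powPderivMem {s : Set (Fin n)} (u : Fin n) (r : ℕ) :
    ∀ {p : MvPolynomial (Fin n) k}, p ∈ supported k s →
      (((pderiv u).toLinearMap : Module.End k (MvPolynomial (Fin n) k)) ^ r) p
        ∈ supported k s := by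
  induction r with
  | zero => intro p hp; simpa using hp
  | succ r ih =>
    intro p hp
    rw [pow_succ, Module.End.mul_apply]
    exact ih (pderivMemSupported u hp)

lemma powPderivZero {s : Set (Fin n)} {u : Fin n} (hu : u ∉ s) {r : ℕ} (hr : r ≠ 0)
    {p : MvPolynomial (Fin n) k} (hp : p ∈ supported k s) :
    (((pderiv u).toLinearMap : Module.End k (MvPolynomial (Fin n) k)) ^ r) p = 0 := by
  obtain ⟨r, rfl⟩ := Nat.exists_eq_succ_of_ne_zero hr
  rw [pow_succ, Module.End.mul_apply]
  have : ((pderiv u).toLinearMap : Module.End k (MvPolynomial (Fin n) k)) p = pderiv u p := rfl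
  rw [this, pderivZeroOfSupported hp hu, map_zero]

lemma listProdMemAux {S : Subalgebra k (MvPolynomial (Fin n) k)} :
    ∀ (L : List (Module.End k (MvPolynomial (Fin n) k))),
    (∀ a ∈ L, ∀ q ∈ S, a q ∈ S) → ∀ {p}, p ∈ S → L.prod p ∈ S := by
  intro L
  induction L with
  | nil => intro _ p hp; simpa using hp
  | cons a l ih =>
    intro hL p hp
    rw [List.prod_cons, Module.End.mul_apply]
    exact hL a List.mem_cons_self _
      (ih (fun b hb => hL b (List.mem_cons_of_mem _ hb)) hp)

lemma listProdZeroAux {S : Subalgebra k (MvPolynomial (Fin n) k)} :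
    ∀ (L : List (Module.End k (MvPolynomial (Fin n) k))),
    (∀ a ∈ L, ∀ q ∈ S, a q ∈ S) →
    ∀ a₀ ∈ L, (∀ q ∈ S, a₀ q = 0) → ∀ {p}, p ∈ S → L.prod p = 0 := by
  intro L
  induction L with
  | nil => intro _ a₀ h; cases h
  | cons a l ih =>
    intro hL a₀ ha₀ hkill p hp
    rw [List.prod_cons, Module.End.mul_apply]
    rcases List.mem_cons.mp ha₀ with rfl | h
    · exact hkill _ (listProdMemAux l (fun b hb => hL b (List.mem_cons_of_mem _ hb)) hp)
    · rw [ih (fun b hb => hL b (List.mem_cons_of_mem _ hb)) a₀ h hkill hp, map_zero]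

lemma pdApplyZero {s : Set (Fin n)} {p : MvPolynomial (Fin n) k}
    (hp : p ∈ supported k s) {α : Fin n →₀ ℕ} {i : Fin n} (hi : i ∉ s) (hαi : α i ≠ 0) :
    pd α p = 0 := by
  unfold pd
  apply listProdZeroAux _ ?_
    (((pderiv i).toLinearMap : Module.End k (MvPolynomial (Fin n) k)) ^ (α i)) ?_ ?_ hp
  · intro a ha q hq
    obtain ⟨t, rfl⟩ := List.mem_ofFn.mp ha
    exact powPderivMem t _ hq
  · exact List.mem_ofFn.mpr ⟨i, rfl⟩
  · intro q hq
    exact powPderivZero hi hαi hq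

lemma apolEqSum (g F : MvPolynomial (Fin n) k) :
    apol g F = ∑ α ∈ g.support, coeff α g • pd α F := rfl

lemma apolMonomial (u : Fin n →₀ ℕ) (r : k) (F : MvPolynomial (Fin n) k) :
    apol (monomial u r) F = r • pd u F := by
  unfold apol
  apply MvPolynomial.sum_monomial_eq
  rw [zero_smul]

lemma apolSmul (a : k) (g F : MvPolynomial (Fin n) k) :
    apol (a • g) F = a • apol g F := by
  unfold apol
  change ((a • AddMonoidAlgebra.coeff g).sum fun α c => c • pd α F) = _
  rw [Finsupp.sum_smul_index (fun i => by rw [zero_smul]), Finsupp.smul_sum]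
  exact Finsupp.sum_congr fun α _ => (mul_smul a _ _)

lemma apolAddLeft (g h F : MvPolynomial (Fin n) k) :
    apol (g + h) F = apol g F + apol h F := by
  unfold apol
  exact Finsupp.sum_add_index' (fun α => zero_smul k _) (fun α b c => add_smul b c _)

lemma apolAddRight (g F F' : MvPolynomial (Fin n) k) :
    apol g (F + F') = apol g F + apol g F' := by
  unfold apol
  rw [← Finsupp.sum_add]
  exact Finsupp.sum_congr fun α _ => by rw [map_add, smul_add]

lemma apolSumRight {ι : Type*} (g : MvPolynomial (Fin n) k) (t : Finset ι)
    (f : ι → MvPolynomial (Fin n) k) :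
    apol g (∑ i ∈ t, f i) = ∑ i ∈ t, apol g (f i) := by
  classical
  induction t using Finset.induction_on with
  | empty =>
    simp only [Finset.sum_empty]
    unfold apol
    simp [map_zero]
  | insert _ _ h ih =>
    rw [Finset.sum_insert h, Finset.sum_insert h, apolAddRight, ih]

lemma apolC (a : k) (F : MvPolynomial (Fin n) k) : apol (C a) F = a • F := by
  rw [C_apply, apolMonomial, pdZero, Module.End.one_apply]

lemma apolSupported {g q : MvPolynomial (Fin n) k} {s : Set (Fin n)} (hq : q ∈ supported k s)
    (h : ∀ α ∈ g.support, ∀ i ∈ α.support, i ∉ s) :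
    apol g q = coeff 0 g • q := by
  rw [apolEqSum, Finset.sum_eq_single 0]
  · rw [pdZero, Module.End.one_apply]
  · intro α hα hα0
    obtain ⟨i, hi⟩ : ∃ i, α i ≠ 0 := by
      by_contra hcon
      push_neg at hcon
      exact hα0 (Finsupp.ext hcon)
    rw [pdApplyZero hq (h α hα i (Finsupp.mem_support_iff.mpr hi)) hi, smul_zero]
  · intro h0
    rw [MvPolynomial.notMem_support_iff.mp h0, zero_smul]

lemma apolSub {k : Type*} [CommRing k] {n : ℕ} (p q F : MvPolynomial (Fin n) k) :
    apol (p - q) F = apol p F - apol q F := by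
  have h := apolAddLeft (p - q) q F
  rw [sub_add_cancel] at h
  rw [h, add_sub_cancel_right]

end Aux

set_option maxHeartbeats 2000000 in
/-- With `F = G + Σ_{j=m+1}^n y_j²`, `σ ∈ k[x_1,…,x_m]` of order `deg G` with
`σ ∘ G = 1`: all products `x_i x_j` with `i ≤ j`, `j ≥ m+1` lie in
`Ann(F) + (σ)`; in particular the images of `x_{m+1},…,x_n` lie in the socle
of `S[n]/(Ann(F)+(σ))` (they are killed by the maximal ideal `(x_1,…,x_n)`). -/
theorem mixed_products_in_socle {k : Type*} [Field k] [CharZero k] {m n : ℕ}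
    (hmn : m ≤ n) (G σ : MvPolynomial (Fin n) k)
    (hG : G ∈ MvPolynomial.supported k {i : Fin n | (i : ℕ) < m})
    (hσ : σ ∈ MvPolynomial.supported k {i : Fin n | (i : ℕ) < m})
    (hσord : ∀ d ∈ σ.support, G.totalDegree ≤ d.sum fun _ e => e)
    (hσG : apol σ G = 1)
    (F : MvPolynomial (Fin n) k)
    (hF : F = G + ∑ j ∈ Finset.univ.filter (fun j : Fin n => m ≤ (j : ℕ)),
      MvPolynomial.X j ^ 2)
    (I : Ideal (MvPolynomial (Fin n) k))
    (hI : I = Ideal.span ({g : MvPolynomial (Fin n) k | apol g F = 0} ∪ {σ})) :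
    (∀ i j : Fin n, m ≤ (j : ℕ) → i ≤ j → MvPolynomial.X i * MvPolynomial.X j ∈ I) ∧
    (∀ j : Fin n, m ≤ (j : ℕ) → ∀ i : Fin n,
      Ideal.Quotient.mk I (MvPolynomial.X j) *
        Ideal.Quotient.mk I (MvPolynomial.X i) = 0) := by
  classical
  set T : Finset (Fin n) := Finset.univ.filter (fun j : Fin n => m ≤ (j : ℕ)) with hT
  set S : MvPolynomial (Fin n) k := ∑ j ∈ T, MvPolynomial.X j ^ 2 with hS
  -- variables of monomials of σ are < m
  have hσvars : ∀ α ∈ σ.support, ∀ i ∈ α.support, ((i : Fin n) : ℕ) < m := by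
    intro α hα i hi
    exact mem_supported.mp hσ ((mem_vars i).mpr ⟨α, hα, hi⟩)
  -- pderiv j F = 2 • X j for j ≥ m
  have hpdF : ∀ j : Fin n, m ≤ (j : ℕ) → pderiv j F = (2 : k) • MvPolynomial.X j := by
    intro j hj
    rw [hF, map_add, pderivZeroOfSupported hG (by simpa using Nat.not_lt.mpr hj), map_sum,
      zero_add, Finset.sum_eq_single j]
    · rw [pow_two, pderiv_mul, pderiv_X_self, one_mul, mul_one, two_smul]
    · intro t _ htj
      rw [pow_two, pderiv_mul, pderiv_X_of_ne htj, zero_mul, mul_zero, add_zero]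
    · intro hjT
      exact absurd (Finset.mem_filter.mpr ⟨Finset.mem_univ j, hj⟩) hjT
  -- apol (X i * X j) F = pderiv i (pderiv j F)
  have hXX : ∀ i j : Fin n, apol (MvPolynomial.X i * MvPolynomial.X j) F
      = pderiv i (pderiv j F) := by
    intro i j
    have h1 : (MvPolynomial.X i * MvPolynomial.X j : MvPolynomial (Fin n) k)
        = monomial (Finsupp.single i 1 + Finsupp.single j 1) 1 := by
      calc MvPolynomial.X i * MvPolynomial.X j
          = monomial (Finsupp.single i 1) (1:k) * monomial (Finsupp.single j 1) (1:k) := by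
            rw [← X_pow_eq_monomial, ← X_pow_eq_monomial, pow_one, pow_one]
        _ = monomial (Finsupp.single i 1 + Finsupp.single j 1) 1 := by
            rw [monomial_mul, one_mul]
    rw [h1, apolMonomial, one_smul, pdAdd, pdSingle, pdSingle, pow_one, pow_one,
      Module.End.mul_apply]
    rfl
  -- apol σ (X t ^ 2) = coeff 0 σ • X t ^ 2 for t ≥ m
  have hσsq : ∀ t : Fin n, m ≤ (t : ℕ) →
      apol σ (MvPolynomial.X t ^ 2) = coeff 0 σ • MvPolynomial.X t ^ 2 := by
    intro t ht
    refine apolSupported (s := {i : Fin n | m ≤ (i : ℕ)}) ?_ ?_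
    · have hXt : (MvPolynomial.X t : MvPolynomial (Fin n) k)
          ∈ supported k {i : Fin n | m ≤ (i : ℕ)} := X_mem_supported.mpr ht
      exact pow_mem hXt 2
    · intro α hα i hi
      simpa using Nat.not_le.mpr (hσvars α hα i hi)
  -- apol σ F = 1 + coeff 0 σ • S
  have hσF : apol σ F = 1 + coeff 0 σ • S := by
    rw [hF, apolAddRight, hσG, apolSumRight, hS]
    congr 1
    rw [Finset.smul_sum]
    apply Finset.sum_congr rfl
    intro t ht
    exact hσsq t (Finset.mem_filter.mp ht).2
  rcases eq_or_ne (coeff 0 σ) 0 with hc | hc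
  · -- main case: σ has no constant term
    have hσF1 : apol σ F = 1 := by rw [hσF, hc, zero_smul, add_zero]
    have part1 : ∀ i j : Fin n, m ≤ (j : ℕ) → i ≤ j →
        MvPolynomial.X i * MvPolynomial.X j ∈ I := by
      intro i j hj hij
      rcases eq_or_ne i j with rfl | hne
      · -- X i ^ 2 = (X i ^2 - C 2 * σ) + C 2 * σ
        have hann : apol (MvPolynomial.X i * MvPolynomial.X i - C (2 : k) * σ) F = 0 := by
          rw [apolSub, hXX, hpdF i hj, Derivation.map_smul, pderiv_X_self, C_mul', apolSmul, hσF1,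
            sub_self]
        have h1 : MvPolynomial.X i * MvPolynomial.X i - C (2 : k) * σ ∈ I := by
          rw [hI]
          exact Ideal.subset_span (Or.inl hann)
        have h2 : C (2 : k) * σ ∈ I := by
          rw [hI]
          exact Ideal.mul_mem_left _ _ (Ideal.subset_span (Or.inr rfl))
        simpa using add_mem h1 h2
      · have hann : apol (MvPolynomial.X i * MvPolynomial.X j) F = 0 := by
          rw [hXX, hpdF j hj, Derivation.map_smul, pderiv_X_of_ne (Ne.symm hne), smul_zero]
        rw [hI]
        exact Ideal.subset_span (Or.inl hann)
    refine ⟨part1, ?_⟩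
    intro j hj i
    rw [← map_mul, Ideal.Quotient.eq_zero_iff_mem]
    rcases le_total i j with hij | hji
    · rw [mul_comm]
      exact part1 i j hj hij
    · exact part1 j i (le_trans hj hji) hji
  · -- degenerate case: σ has a nonzero constant term, so 1 ∈ I
    have h0mem : (0 : Fin n →₀ ℕ) ∈ σ.support := MvPolynomial.mem_support_iff.mpr hc
    have hGdeg : G.totalDegree = 0 := by
      have := hσord 0 h0mem
      rwa [Finsupp.sum_zero_index, Nat.le_zero] at this
    have hGsupp : G ∈ supported k {i : Fin n | m ≤ (i : ℕ)} := by
      rw [mem_supported]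
      intro i hi
      obtain ⟨d, hd, hid⟩ := (mem_vars i).mp hi
      have := (MvPolynomial.totalDegree_eq_zero_iff _ G).mp hGdeg d hd i
      exact absurd this (Finsupp.mem_support_iff.mp hid)
    have hσGc : coeff 0 σ • G = 1 := by
      rw [← hσG]
      symm
      apply apolSupported hGsupp
      intro α hα i hi
      simpa using Nat.not_le.mpr (hσvars α hα i hi)
    have hann : apol (σ - C (coeff 0 σ)) F = 0 := by
      rw [apolSub, apolC, hσF, hF, smul_add, hσGc, sub_self]
    have hCc : C (coeff 0 σ) ∈ I := by
      have h1 : σ - C (coeff 0 σ) ∈ I := by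
        rw [hI]; exact Ideal.subset_span (Or.inl hann)
      have h2 : σ ∈ I := by
        rw [hI]; exact Ideal.subset_span (Or.inr rfl)
      simpa using sub_mem h2 h1
    have hone : (1 : MvPolynomial (Fin n) k) ∈ I := by
      have := Ideal.mul_mem_left I (C (coeff 0 σ)⁻¹) hCc
      rwa [← C_mul, inv_mul_cancel₀ hc, C_1] at this
    have hItop : I = ⊤ := Ideal.eq_top_iff_one I |>.mpr hone
    constructor
    · intro i j _ _
      rw [hItop]; exact Submodule.mem_top
    · intro j _ i
      rw [← map_mul, Ideal.Quotient.eq_zero_iff_mem, hItop]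
      exact Submodule.mem_top
end

section
/- Suppose the symmetric decomposition of the Hilbert function of a local Artinian Gorenstein algebra A with sdeg(A) ≥ 7 and dim_k(A) ≤ 16 has first row (1,1,…,1) (i.e., a_1 = 1) and A is not 3-stretched. If additionally H_A(2) ≤ 4 fails to force f_3 ≤ 4, then the decomposition must be (1,1,…,1) + (0,4,4,0), which gives H_A(2) ≥ 5, a contradiction; hence in fact f_3 ≤ 4. -/
/-- Socle degree ≥ 7, dim ≤ 16 case of the rationality theorem, arithmetic of
the symmetric decomposition: `Q a` is the `a`-th row of the symmetric
decomposition of the Hilbert function `H i = Σ_{a=0}^{s−2} Q a i`, each row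
being symmetric about `(s−a)/2` with `Q a 0 = 0` for `a ≥ 1` and first row
`(1,1,…,1)` (i.e. `a₁ = 1`). If `A` is not 3-stretched (some `H i ≥ 2` with
`i ≥ 4`), `dim_k A = Σ_{i=0}^{s} H i ≤ 16` and `H 2 ≤ 4`, then
`f₃ = Σ_{a=0}^{s−3} Q a 1 ≤ 4`. -/
theorem socle_ge_seven_f3_le_four (s : ℕ) (Q : ℕ → ℕ → ℕ)
    (hs : 7 ≤ s)
    (hrow0 : ∀ i, i ≤ s → Q 0 i = 1)
    (hrow0' : ∀ i, s < i → Q 0 i = 0)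
    (hsym : ∀ a, a ≤ s - 2 → ∀ i, i ≤ s - a → Q a i = Q a (s - a - i))
    (hzero0 : ∀ a, 1 ≤ a → Q a 0 = 0)
    (hvanish : ∀ a i, s - a < i → Q a i = 0)
    (hnozero : ∀ a, 1 ≤ a → a ≤ s - 2 → ∀ i j, 1 ≤ i → i ≤ j → j ≤ s - a - 1 →
      Q a j ≠ 0 → Q a i ≠ 0)
    (hdim : ∑ i ∈ Finset.range (s + 1), (∑ a ∈ Finset.range (s - 1), Q a i) ≤ 16)
    (hH2 : (∑ a ∈ Finset.range (s - 1), Q a 2) ≤ 4)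
    (hnot3str : ∃ i, 4 ≤ i ∧ 2 ≤ ∑ a ∈ Finset.range (s - 1), Q a i) :
    ∑ a ∈ Finset.range (s - 2), Q a 1 ≤ 4 := by
  classical
  set cost : ℕ → ℕ := fun a => ∑ i ∈ Finset.range (s + 1), Q a i with hcost
  -- extract a row b ≥ 1 witnessing non-3-stretchedness
  obtain ⟨i, hi4, hHi⟩ := hnot3str
  have hQ0i : Q 0 i ≤ 1 := by
    rcases le_or_gt i s with h | h
    · rw [hrow0 i h]
    · rw [hrow0' i h]; omega
  have hex : ∃ b, 1 ≤ b ∧ b ≤ s - 2 ∧ Q b i ≠ 0 := by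
    by_contra hcon
    push_neg at hcon
    have hz : ∀ a ∈ Finset.Ico 1 (s - 1), Q a i = 0 := by
      intro a ha
      simp only [Finset.mem_Ico] at ha
      exact hcon a ha.1 (by omega)
    have hsum : ∑ a ∈ Finset.range (s - 1), Q a i ≤ 1 := by
      rw [Finset.range_eq_Ico,
        ← Finset.sum_Ico_consecutive _ (Nat.zero_le 1) (by omega : 1 ≤ s - 1),
        Finset.sum_eq_zero hz]
      have : Finset.Ico 0 1 = {0} := rfl
      rw [this, Finset.sum_singleton]
      omega
    omega
  obtain ⟨b, hb1, hb2, hQbi⟩ := hex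
  have hile : i ≤ s - b - 1 := by
    by_contra h
    push_neg at h
    rcases le_or_gt i (s - b) with h' | h'
    · have hieq : s - b - i = 0 := by omega
      have := hsym b hb2 i h'
      rw [hieq, hzero0 b hb1] at this
      exact hQbi this
    · exact hQbi (hvanish b i h')
  have hb5 : b ≤ s - 5 := by omega
  have hQb1 : Q b 1 ≠ 0 := hnozero b hb1 hb2 1 i le_rfl (by omega) hile hQbi
  have hsymb1 : Q b 1 = Q b (s - b - 1) := hsym b hb2 1 (by omega)
  have hQbtop : Q b (s - b - 1) ≠ 0 := by rw [← hsymb1]; exact hQb1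
  have hQb2 : Q b 2 ≠ 0 := hnozero b hb1 hb2 2 (s - b - 1) (by omega) (by omega) le_rfl hQbtop
  have hQb3 : Q b 3 ≠ 0 := hnozero b hb1 hb2 3 (s - b - 1) (by omega) (by omega) le_rfl hQbtop
  -- cost lower bound for row b
  have hcostb : 2 * Q b 1 + 2 ≤ cost b := by
    have h1 : (1 : ℕ) ∉ ({2, 3, s - b - 1} : Finset ℕ) := by simp; omega
    have h2 : (2 : ℕ) ∉ ({3, s - b - 1} : Finset ℕ) := by simp; omega
    have h3 : (3 : ℕ) ∉ ({s - b - 1} : Finset ℕ) := by simp; omega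
    have hsub : ({1, 2, 3, s - b - 1} : Finset ℕ) ⊆ Finset.range (s + 1) := by
      intro x hx
      simp only [Finset.mem_insert, Finset.mem_singleton] at hx
      simp only [Finset.mem_range]
      rcases hx with h | h | h | h <;> omega
    calc 2 * Q b 1 + 2 ≤ ∑ j ∈ ({1, 2, 3, s - b - 1} : Finset ℕ), Q b j := by
          rw [Finset.sum_insert h1, Finset.sum_insert h2, Finset.sum_insert h3,
            Finset.sum_singleton]
          omega
      _ ≤ cost b := Finset.sum_le_sum_of_subset hsub
  -- cost lower bound for generic rows 1 ≤ a ≤ s - 3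
  have hcosta : ∀ a, 1 ≤ a → a ≤ s - 3 → 2 * Q a 1 ≤ cost a := by
    intro a ha1 ha3
    have hsymm : Q a 1 = Q a (s - a - 1) := hsym a (by omega) 1 (by omega)
    have h1 : (1 : ℕ) ∉ ({s - a - 1} : Finset ℕ) := by simp; omega
    have hsub : ({1, s - a - 1} : Finset ℕ) ⊆ Finset.range (s + 1) := by
      intro x hx
      simp only [Finset.mem_insert, Finset.mem_singleton] at hx
      simp only [Finset.mem_range]
      rcases hx with h | h <;> omega
    calc 2 * Q a 1 ≤ ∑ j ∈ ({1, s - a - 1} : Finset ℕ), Q a j := by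
          rw [Finset.sum_insert h1, Finset.sum_singleton]
          omega
      _ ≤ cost a := Finset.sum_le_sum_of_subset hsub
  -- accounting
  have hswap : ∑ i ∈ Finset.range (s + 1), ∑ a ∈ Finset.range (s - 1), Q a i
      = ∑ a ∈ Finset.range (s - 1), cost a := Finset.sum_comm
  have hrow0sum : cost 0 = s + 1 := by
    have : ∀ j ∈ Finset.range (s + 1), Q 0 j = 1 := by
      intro j hj
      exact hrow0 j (by simp only [Finset.mem_range] at hj; omega)
    simp only [hcost]
    rw [Finset.sum_congr rfl this]
    simp
  have hsplit : ∑ a ∈ Finset.range (s - 1), cost a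
      = cost 0 + ∑ a ∈ Finset.Ico 1 (s - 1), cost a := by
    rw [Finset.range_eq_Ico,
      ← Finset.sum_Ico_consecutive _ (Nat.zero_le 1) (by omega : 1 ≤ s - 1)]
    congr 1
  have hmono : ∑ a ∈ Finset.Ico 1 (s - 2), cost a ≤ ∑ a ∈ Finset.Ico 1 (s - 1), cost a :=
    Finset.sum_le_sum_of_subset (Finset.Ico_subset_Ico le_rfl (by omega))
  have hbmem : b ∈ Finset.Ico 1 (s - 2) := by
    simp only [Finset.mem_Ico]
    omega
  have hlow : 2 * (∑ a ∈ Finset.Ico 1 (s - 2), Q a 1) + 2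
      ≤ ∑ a ∈ Finset.Ico 1 (s - 2), cost a := by
    rw [← Finset.add_sum_erase _ cost hbmem, ← Finset.add_sum_erase _ (fun a => Q a 1) hbmem]
    have herase : ∑ a ∈ (Finset.Ico 1 (s - 2)).erase b, 2 * Q a 1
        ≤ ∑ a ∈ (Finset.Ico 1 (s - 2)).erase b, cost a := by
      apply Finset.sum_le_sum
      intro a ha
      have ha' := Finset.mem_of_mem_erase ha
      simp only [Finset.mem_Ico] at ha'
      exact hcosta a ha'.1 (by omega)
    rw [← Finset.mul_sum] at herase
    omega
  have hgoalsplit : ∑ a ∈ Finset.range (s - 2), Q a 1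
      = Q 0 1 + ∑ a ∈ Finset.Ico 1 (s - 2), Q a 1 := by
    rw [Finset.range_eq_Ico,
      ← Finset.sum_Ico_consecutive _ (Nat.zero_le 1) (by omega : 1 ≤ s - 2)]
    congr 1
  have hQ01 : Q 0 1 = 1 := hrow0 1 (by omega)
  rw [hswap, hsplit, hrow0sum] at hdim
  omega
end
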